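/- There exists an absolute constant C₀ > 0 such that for every integer r ≥ 2 there is an n₀ with the following property: for every n ≥ n₀ there exists a graph G with at most C₀·r²·(log r)·n edges such that every coloring of the edges of G with r colors yields a monochromatic path on n vertices (i.e., there is a path with n vertices all of whose edges receive the same color). In other words, the r-color size Ramsey number of the path P_n satisfies R̂(P_n, r) ≤ C₀ r² (log r) n. -/

import Mathlib

open scoped Classical

/-- The external neighborhood of a vertex set `U` in a simple graph `G`:
all vertices outside `U` having a neighbor in `U`. -/
def SimpleGraph.extNb {V : Type*} (G : SimpleGraph V) (U : Set V) : Set V :=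
  {v | v ∉ U ∧ ∃ u ∈ U, G.Adj u v}

/-- A graph `G` on `n` vertices is an `α`-expander if every vertex subset `U` with
`|U| ≤ n/2` satisfies `|N_G(U)| ≥ α |U|`. -/
def SimpleGraph.IsExpander {V : Type*} [Fintype V] (G : SimpleGraph V) (α : ℝ) : Prop :=
  ∀ U : Set V, (U.ncard : ℝ) ≤ (Fintype.card V : ℝ) / 2 →
    α * U.ncard ≤ ((G.extNb U).ncard : ℝ)

/-- `G` is a `(k, α)`-expander if every vertex subset `U` with `|U| ≤ k`
satisfies `|N_G(U)| ≥ α |U|`. -/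
def SimpleGraph.IsKExpander {V : Type*} (G : SimpleGraph V) (k α : ℝ) : Prop :=
  ∀ U : Set V, (U.ncard : ℝ) ≤ k → α * U.ncard ≤ ((G.extNb U).ncard : ℝ)

namespace SR

open Finset SimpleGraph


lemma one_add_inv_pow_le (k : ℕ) (hk : 1 ≤ k) : (1 + 1/(k:ℝ)) ^ k ≤ 3 := by
  have hkpos : (0:ℝ) < k := by exact_mod_cast hk
  have h1 : (1 + 1/(k:ℝ)) ≤ Real.exp (1/k) := by
    have := Real.add_one_le_exp (1/(k:ℝ)); linarith
  have h2 : (1 + 1/(k:ℝ)) ^ k ≤ (Real.exp (1/k)) ^ k := by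
    apply pow_le_pow_left₀ (by positivity) h1
  have h3 : (Real.exp (1/(k:ℝ))) ^ k = Real.exp 1 := by
    rw [← Real.exp_nat_mul]
    congr 1
    field_simp
  rw [h3] at h2
  have := Real.exp_one_lt_d9
  linarith

lemma pow_le_factorial_mul (k : ℕ) : (k : ℝ) ^ k ≤ 3 ^ k * (Nat.factorial k) := by
  induction k with
  | zero => simp
  | succ k ih =>
    rcases Nat.eq_zero_or_pos k with hk | hk
    · subst hk; norm_num [Nat.factorial]
    have hkpos : (0:ℝ) < k := by exact_mod_cast hk
    have key : ((k:ℝ) + 1) ^ k ≤ 3 * (k:ℝ) ^ k := by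
      have : ((k:ℝ) + 1) = (k:ℝ) * (1 + 1/(k:ℝ)) := by field_simp
      rw [this, mul_pow]
      have := one_add_inv_pow_le k hk
      have hp : (0:ℝ) ≤ (k:ℝ)^k := by positivity
      calc (k:ℝ)^k * (1 + 1/(k:ℝ))^k ≤ (k:ℝ)^k * 3 := by
            apply mul_le_mul_of_nonneg_left this hp
        _ = 3 * (k:ℝ)^k := by ring
    have : ((k:ℝ)+1)^(k+1) = ((k:ℝ)+1) * ((k:ℝ)+1)^k := by ring
    push_cast
    rw [this]
    calc ((k:ℝ)+1) * ((k:ℝ)+1)^k ≤ ((k:ℝ)+1) * (3 * (k:ℝ)^k) := by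
          apply mul_le_mul_of_nonneg_left key (by positivity)
      _ ≤ ((k:ℝ)+1) * (3 * (3^k * (Nat.factorial k))) := by
          apply mul_le_mul_of_nonneg_left _ (by positivity)
          apply mul_le_mul_of_nonneg_left ih (by norm_num)
      _ = 3^(k+1) * ((Nat.factorial k) * ((k:ℝ)+1)) := by ring
      _ = 3^(k+1) * (Nat.factorial (k+1)) := by
          rw [Nat.factorial_succ]; push_cast; ring

lemma choose_le_ratio_pow (x k : ℕ) (hk : 1 ≤ k) :
    ((x.choose k : ℕ) : ℝ) ≤ (3 * x / k) ^ k := by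
  have h1 : (Nat.factorial k) * x.choose k ≤ x ^ k := by
    rw [← Nat.descFactorial_eq_factorial_mul_choose]
    exact Nat.descFactorial_le_pow x k
  have h1' : (Nat.factorial k : ℝ) * (x.choose k : ℝ) ≤ (x:ℝ) ^ k := by exact_mod_cast h1
  have hkpos : (0:ℝ) < k := by exact_mod_cast hk
  have hfac : (0:ℝ) < Nat.factorial k := by exact_mod_cast Nat.factorial_pos k
  have h2 : ((x.choose k : ℕ) : ℝ) ≤ (x:ℝ)^k / Nat.factorial k := by
    rw [le_div_iff₀ hfac]; linarith [h1']
  have h3 : (x:ℝ)^k / Nat.factorial k ≤ 3^k * (x:ℝ)^k / (k:ℝ)^k := by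
    rw [div_le_div_iff₀ hfac (by positivity)]
    have := pow_le_factorial_mul k
    have hx : (0:ℝ) ≤ (x:ℝ)^k := by positivity
    calc (x:ℝ)^k * (k:ℝ)^k ≤ (x:ℝ)^k * (3^k * Nat.factorial k) := by
          apply mul_le_mul_of_nonneg_left this hx
      _ = 3^k * (x:ℝ)^k * Nat.factorial k := by ring
  have h4 : (3 * (x:ℝ) / k) ^ k = 3^k * (x:ℝ)^k / (k:ℝ)^k := by
    rw [div_pow, mul_pow]
  rw [h4]
  linarith

lemma choose_sub_le (M m b : ℕ) (h2m : 2 * m ≤ M) (hbm : b ≤ m) :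
    ((M - b).choose (m - b) : ℝ) ≤ (2 * m / M) ^ b * (M.choose m) := by
  induction b with
  | zero => simp
  | succ b ih =>
    have hb : b ≤ m := Nat.le_of_succ_le hbm
    have ihb := ih hb
    have hbm' : b < m := hbm
    have hbM : b < M := by omega
    have hMpos : (0:ℝ) < M := by
      have : 0 < M := by omega
      exact_mod_cast this
    -- Nat identity
    have key : (M - b) * ((M - b - 1).choose (m - b - 1)) = ((M - b).choose (m - b)) * (m - b) := by
      have h := Nat.add_one_mul_choose_eq (M - b - 1) (m - b - 1)
      have h1 : M - b - 1 + 1 = M - b := by omega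
      have h2 : m - b - 1 + 1 = m - b := by omega
      rw [h1, h2] at h
      exact h
    have hXpos : (0:ℝ) < ((M - b : ℕ) : ℝ) := by
      have : 0 < M - b := by omega
      exact_mod_cast this
    have keyR : ((M - b : ℕ) : ℝ) * ((M - b - 1).choose (m - b - 1) : ℝ)
        = ((M - b).choose (m - b) : ℝ) * ((m - b : ℕ) : ℝ) := by exact_mod_cast key
    have hC' : ((M - b - 1).choose (m - b - 1) : ℝ)
        = ((M - b).choose (m - b) : ℝ) * ((m - b : ℕ) : ℝ) / ((M - b : ℕ) : ℝ) := by
      field_simp at keyR ⊢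
      linarith [keyR]
    have hfrac : ((m - b : ℕ) : ℝ) / ((M - b : ℕ) : ℝ) ≤ 2 * m / M := by
      rw [div_le_div_iff₀ hXpos hMpos]
      have hcast1 : ((m - b : ℕ) : ℝ) = (m : ℝ) - b := by
        have : b ≤ m := hb; exact Nat.cast_sub this
      have hcast2 : ((M - b : ℕ) : ℝ) = (M : ℝ) - b := by
        have : b ≤ M := hbM.le; exact Nat.cast_sub this
      rw [hcast1, hcast2]
      have hmb : 2 * (m:ℝ) * b ≤ (M:ℝ) * b := by
        have : 2 * m * b ≤ M * b := Nat.mul_le_mul_right b h2m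
        exact_mod_cast this
      nlinarith [hmb, hMpos]
    have hsub1 : M - (b + 1) = M - b - 1 := by omega
    have hsub2 : m - (b + 1) = m - b - 1 := by omega
    rw [hsub1, hsub2, hC']
    have hCnn : (0:ℝ) ≤ ((M - b).choose (m - b) : ℝ) := by positivity
    calc ((M - b).choose (m - b) : ℝ) * ((m - b : ℕ) : ℝ) / ((M - b : ℕ) : ℝ)
        = ((M - b).choose (m - b) : ℝ) * (((m - b : ℕ) : ℝ) / ((M - b : ℕ) : ℝ)) := by ring
      _ ≤ ((M - b).choose (m - b) : ℝ) * (2 * m / M) := by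
          apply mul_le_mul_of_nonneg_left hfrac hCnn
      _ ≤ ((2 * m / M) ^ b * (M.choose m)) * (2 * m / M) := by
          apply mul_le_mul_of_nonneg_right ihb (by positivity)
      _ = (2 * m / M) ^ (b + 1) * (M.choose m) := by ring

lemma card_supersets {α : Type*} [DecidableEq α] (Ω B : Finset α) (m : ℕ)
    (hB : B ⊆ Ω) (hbm : B.card ≤ m) :
    ((Ω.powersetCard m).filter (fun E => B ⊆ E)).card
      = (Ω.card - B.card).choose (m - B.card) := by
  have hcard : ((Ω \ B).powersetCard (m - B.card)).card = (Ω.card - B.card).choose (m - B.card) := by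
    rw [Finset.card_powersetCard, Finset.card_sdiff_of_subset hB]
  rw [← hcard]
  apply Finset.card_bij' (fun E _ => E \ B) (fun F _ => F ∪ B)
  · intro E hE
    simp only [Finset.mem_filter, Finset.mem_powersetCard] at hE
    obtain ⟨⟨hEΩ, hEm⟩, hBE⟩ := hE
    simp only [Finset.mem_powersetCard]
    constructor
    · exact Finset.sdiff_subset_sdiff hEΩ (le_refl B)
    · rw [Finset.card_sdiff_of_subset hBE, hEm]
  · intro F hF
    simp only [Finset.mem_powersetCard] at hF
    obtain ⟨hFsub, hFcard⟩ := hF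
    simp only [Finset.mem_filter, Finset.mem_powersetCard]
    have hdisj : Disjoint F B := by
      apply Finset.disjoint_left.mpr
      intro a haF haB
      exact (Finset.mem_sdiff.mp (hFsub haF)).2 haB
    refine ⟨⟨?_, ?_⟩, Finset.subset_union_right⟩
    · apply Finset.union_subset _ hB
      exact hFsub.trans (Finset.sdiff_subset)
    · rw [Finset.card_union_of_disjoint hdisj, hFcard]
      omega
  · intro E hE
    simp only [Finset.mem_filter, Finset.mem_powersetCard] at hE
    exact Finset.sdiff_union_of_subset hE.2
  · intro F hF
    simp only [Finset.mem_powersetCard] at hF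
    have hdisj : Disjoint F B := by
      apply Finset.disjoint_left.mpr
      intro a haF haB
      exact (Finset.mem_sdiff.mp (hF.1 haF)).2 haB
    rw [Finset.union_sdiff_right]
    exact Finset.sdiff_eq_self_of_disjoint hdisj

lemma walk_prefix {V : Type*} {H : SimpleGraph V} {u w : V} (p : H.Walk u w) (hp : p.IsPath) :
    ∀ j ≤ p.length, ∃ (x : V) (q : H.Walk u x), q.IsPath ∧ q.length = j ∧
      (∀ e ∈ q.edges, e ∈ p.edges) ∧ (∀ v ∈ q.support, v ∈ p.support) := by
  induction p with
  | nil =>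
    intro j hj
    simp only [SimpleGraph.Walk.length_nil, Nat.le_zero] at hj
    subst hj
    exact ⟨_, SimpleGraph.Walk.nil, SimpleGraph.Walk.IsPath.nil, rfl, by simp, by simp⟩
  | @cons a b c h p' ih =>
    intro j hj
    cases j with
    | zero =>
      refine ⟨a, SimpleGraph.Walk.nil, SimpleGraph.Walk.IsPath.nil, rfl, by simp, ?_⟩
      intro v hv
      simp only [SimpleGraph.Walk.support_nil, List.mem_singleton] at hv
      subst hv
      exact SimpleGraph.Walk.start_mem_support _
    | succ j =>
      have hp' : p'.IsPath := (SimpleGraph.Walk.cons_isPath_iff h p').mp hp |>.1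
      have hna : a ∉ p'.support := (SimpleGraph.Walk.cons_isPath_iff h p').mp hp |>.2
      have hj' : j ≤ p'.length := by
        simp only [SimpleGraph.Walk.length_cons] at hj; omega
      obtain ⟨x, q, hq, hqlen, hqe, hqs⟩ := ih hp' j hj'
      refine ⟨x, SimpleGraph.Walk.cons h q, ?_, ?_, ?_, ?_⟩
      · rw [SimpleGraph.Walk.cons_isPath_iff]
        exact ⟨hq, fun hmem => hna (hqs a hmem)⟩
      · simp [hqlen]
      · intro e he
        simp only [SimpleGraph.Walk.edges_cons, List.mem_cons] at he ⊢
        rcases he with he | he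
        · exact Or.inl he
        · exact Or.inr (hqe e he)
      · intro v hv
        simp only [SimpleGraph.Walk.support_cons, List.mem_cons] at hv ⊢
        rcases hv with hv | hv
        · exact Or.inl hv
        · exact Or.inr (hqs v hv)

lemma geom_sum_Icc_lt (s : ℕ) : ∑ a ∈ Icc 1 s, ((1:ℝ)/2)^a < 1 := by
  have h : ∀ t : ℕ, ∑ a ∈ Icc 1 t, ((1:ℝ)/2)^a = 1 - (1/2)^t := by
    intro t
    induction t with
    | zero => simp
    | succ t ih =>
      rw [Finset.sum_Icc_succ_top (by omega : 1 ≤ t + 1), ih, pow_succ]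
      ring
  rw [h s]
  have : (0:ℝ) < (1/2)^s := by positivity
  linarith

lemma exists_sparse (N m L s : ℕ) (hL : 1 ≤ L)
    (hm : m ≤ N.choose 2) (hbm : 2 * L * s ≤ m) (h2m : 2 * m ≤ N.choose 2)
    (key : ∀ a : ℕ, 1 ≤ a → a ≤ s →
      ((N.choose a : ℕ) : ℝ) * (((a ^ 2).choose (2 * L * a) : ℕ) : ℝ)
        * (2 * m / (N.choose 2)) ^ (2 * L * a) ≤ (1 / 2) ^ a) :
    ∃ E : Finset (Sym2 (Fin N)), (∀ e ∈ E, ¬ e.IsDiag) ∧ E.card = m ∧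
      ∀ A : Finset (Fin N), A.Nonempty → A.card ≤ s →
        (E.filter (fun e => ∀ x ∈ e, x ∈ A)).card < 2 * L * A.card := by
  classical
  set Ω : Finset (Sym2 (Fin N)) := (⊤ : SimpleGraph (Fin N)).edgeFinset with hΩ
  have hM : Ω.card = N.choose 2 := by
    rw [hΩ, SimpleGraph.card_edgeFinset_top_eq_card_choose_two, Fintype.card_fin]
  set Bad : ℕ → Finset (Finset (Sym2 (Fin N))) := fun a =>
    (Ω.powersetCard m).filter (fun E => ∃ A : Finset (Fin N), A.card = a ∧
      2 * L * a ≤ (E.filter (fun e => ∀ x ∈ e, x ∈ A)).card) with hBad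
  -- counting each Bad a
  have hBadCard : ∀ a : ℕ, 1 ≤ a → a ≤ s → ((Bad a).card : ℝ) ≤
      ((N.choose a : ℕ) : ℝ) * (((a ^ 2).choose (2 * L * a) : ℕ) : ℝ)
        * (((N.choose 2 - 2 * L * a).choose (m - 2 * L * a) : ℕ) : ℝ) := by
    intro a ha has
    set b := 2 * L * a with hb
    have hbm' : b ≤ m := by
      calc b = 2 * L * a := hb
        _ ≤ 2 * L * s := Nat.mul_le_mul_left _ has
        _ ≤ m := hbm
    have hsub : Bad a ⊆ (univ.powersetCard a).biUnion (fun A =>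
        ((Ω.filter (fun e => ∀ x ∈ e, x ∈ A)).powersetCard b).biUnion
          (fun B => (Ω.powersetCard m).filter (fun E => B ⊆ E))) := by
      intro E hE
      rw [hBad, Finset.mem_filter] at hE
      obtain ⟨hEpc, A, hAcard, hAbad⟩ := hE
      obtain ⟨hEΩ, hEm⟩ := Finset.mem_powersetCard.mp hEpc
      obtain ⟨B, hBsub, hBcard⟩ := Finset.exists_subset_card_eq hAbad
      rw [Finset.mem_biUnion]
      refine ⟨A, Finset.mem_powersetCard.mpr ⟨Finset.subset_univ A, hAcard⟩, ?_⟩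
      rw [Finset.mem_biUnion]
      refine ⟨B, ?_, ?_⟩
      · rw [Finset.mem_powersetCard]
        refine ⟨?_, hBcard⟩
        intro e he
        have h := hBsub he
        rw [Finset.mem_filter] at h ⊢
        exact ⟨hEΩ h.1, h.2⟩
      · rw [Finset.mem_filter]
        exact ⟨hEpc, (hBsub.trans (Finset.filter_subset _ E))⟩
    have h1 : (Bad a).card ≤
        ∑ A ∈ univ.powersetCard a,
          ∑ B ∈ (Ω.filter (fun e => ∀ x ∈ e, x ∈ A)).powersetCard b,
            ((Ω.powersetCard m).filter (fun E => B ⊆ E)).card :=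
      calc (Bad a).card ≤ _ := Finset.card_le_card hsub
        _ ≤ _ := Finset.card_biUnion_le
        _ ≤ _ := Finset.sum_le_sum (fun A _ => Finset.card_biUnion_le)
    have h2 : ∀ A ∈ univ.powersetCard a,
        ∑ B ∈ (Ω.filter (fun e => ∀ x ∈ e, x ∈ A)).powersetCard b,
            ((Ω.powersetCard m).filter (fun E => B ⊆ E)).card
          ≤ (a ^ 2).choose b * (N.choose 2 - b).choose (m - b) := by
      intro A hA
      have hAcard : A.card = a := (Finset.mem_powersetCard.mp hA).2
      have hterm : ∀ B ∈ (Ω.filter (fun e => ∀ x ∈ e, x ∈ A)).powersetCard b,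
          ((Ω.powersetCard m).filter (fun E => B ⊆ E)).card
            = (N.choose 2 - b).choose (m - b) := by
        intro B hB
        rw [Finset.mem_powersetCard] at hB
        have hBΩ : B ⊆ Ω := hB.1.trans (Finset.filter_subset _ _)
        rw [card_supersets Ω B m hBΩ (by rw [hB.2]; exact hbm'), hB.2, hM]
      rw [Finset.sum_congr rfl hterm, Finset.sum_const, smul_eq_mul,
        Finset.card_powersetCard]
      apply Nat.mul_le_mul_right
      apply Nat.choose_le_choose
      -- edges inside A are at most a^2
      have hsubA : Ω.filter (fun e => ∀ x ∈ e, x ∈ A) ⊆ A.sym2 := by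
        intro e he
        rw [Finset.mem_filter] at he
        rw [Finset.mem_sym2_iff]
        exact he.2
      calc (Ω.filter (fun e => ∀ x ∈ e, x ∈ A)).card ≤ A.sym2.card :=
            Finset.card_le_card hsubA
        _ = (A.card + 1).choose 2 := Finset.card_sym2 A
        _ ≤ a ^ 2 := by
            rw [hAcard, Nat.choose_two_right]
            have h1 : a + 1 - 1 = a := by omega
            rw [h1]
            have h2 : (a + 1) * a ≤ 2 * a ^ 2 := by nlinarith [ha]
            omega
    have h3 : (Bad a).card ≤ N.choose a * ((a ^ 2).choose b * (N.choose 2 - b).choose (m - b)) := by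
      calc (Bad a).card ≤ _ := h1
        _ ≤ ∑ _A ∈ univ.powersetCard a, (a ^ 2).choose b * (N.choose 2 - b).choose (m - b) :=
            Finset.sum_le_sum h2
        _ = (univ.powersetCard a).card * ((a ^ 2).choose b * (N.choose 2 - b).choose (m - b)) := by
            rw [Finset.sum_const, smul_eq_mul]
        _ = N.choose a * ((a ^ 2).choose b * (N.choose 2 - b).choose (m - b)) := by
            rw [Finset.card_powersetCard, Finset.card_univ, Fintype.card_fin]
    calc ((Bad a).card : ℝ)
        ≤ ((N.choose a * ((a ^ 2).choose b * (N.choose 2 - b).choose (m - b)) : ℕ) : ℝ) := by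
          exact_mod_cast h3
      _ = _ := by push_cast; ring
  -- sum over a
  set T := (Icc 1 s).biUnion Bad with hT
  have hTcard : (T.card : ℝ) < ((N.choose 2).choose m : ℕ) := by
    have h0 : (T.card : ℝ) ≤ ∑ a ∈ Icc 1 s, ((Bad a).card : ℝ) := by
      exact_mod_cast Nat.cast_le.mpr Finset.card_biUnion_le
    have h1 : ∀ a ∈ Icc 1 s, ((Bad a).card : ℝ) ≤ ((1:ℝ)/2)^a * (((N.choose 2).choose m : ℕ) : ℝ) := by
      intro a haI
      rw [Finset.mem_Icc] at haI
      have hb : 2 * L * a ≤ m := by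
        calc 2 * L * a ≤ 2 * L * s := Nat.mul_le_mul_left _ haI.2
          _ ≤ m := hbm
      calc ((Bad a).card : ℝ) ≤ _ := hBadCard a haI.1 haI.2
        _ ≤ ((N.choose a : ℕ) : ℝ) * (((a ^ 2).choose (2 * L * a) : ℕ) : ℝ)
            * ((2 * m / (N.choose 2)) ^ (2 * L * a) * ((N.choose 2).choose m)) := by
            apply mul_le_mul_of_nonneg_left (choose_sub_le (N.choose 2) m (2 * L * a) h2m hb)
            positivity
        _ = (((N.choose a : ℕ) : ℝ) * (((a ^ 2).choose (2 * L * a) : ℕ) : ℝ)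
            * (2 * m / (N.choose 2)) ^ (2 * L * a)) * ((N.choose 2).choose m) := by ring
        _ ≤ (1/2)^a * ((N.choose 2).choose m) := by
            apply mul_le_mul_of_nonneg_right (key a haI.1 haI.2)
            positivity
    calc (T.card : ℝ) ≤ _ := h0
      _ ≤ ∑ a ∈ Icc 1 s, ((1:ℝ)/2)^a * (((N.choose 2).choose m : ℕ) : ℝ) := Finset.sum_le_sum h1
      _ = (∑ a ∈ Icc 1 s, ((1:ℝ)/2)^a) * (((N.choose 2).choose m : ℕ) : ℝ) := by
          rw [← Finset.sum_mul]
      _ < 1 * (((N.choose 2).choose m : ℕ) : ℝ) := by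
          apply mul_lt_mul_of_pos_right (geom_sum_Icc_lt s)
          exact_mod_cast Nat.choose_pos hm
      _ = ((N.choose 2).choose m : ℕ) := by rw [one_mul]
  -- extract a good E
  have hTcardN : T.card < (Ω.powersetCard m).card := by
    rw [Finset.card_powersetCard, hM]
    exact_mod_cast hTcard
  have hgood : ∃ E ∈ Ω.powersetCard m, E ∉ T := by
    by_contra hcon
    push_neg at hcon
    have : Ω.powersetCard m ⊆ T := fun E hE => hcon E hE
    have := Finset.card_le_card this
    omega
  obtain ⟨E, hEpc, hET⟩ := hgood
  obtain ⟨hEΩ, hEm⟩ := Finset.mem_powersetCard.mp hEpc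
  refine ⟨E, ?_, hEm, ?_⟩
  · intro e he
    have heΩ := hEΩ he
    rw [hΩ, SimpleGraph.mem_edgeFinset] at heΩ
    induction e with
    | _ x y =>
      rw [SimpleGraph.mem_edgeSet, SimpleGraph.top_adj] at heΩ
      rw [Sym2.mk_isDiag_iff]
      exact heΩ
  · intro A hAne hAs
    by_contra hcon
    push_neg at hcon
    apply hET
    rw [hT, Finset.mem_biUnion]
    refine ⟨A.card, Finset.mem_Icc.mpr ⟨Finset.card_pos.mpr hAne, hAs⟩, ?_⟩
    rw [hBad, Finset.mem_filter]
    exact ⟨hEpc, A, rfl, hcon⟩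


def restrict {V : Type*} (H : SimpleGraph V) (W : Finset V) : SimpleGraph V where
  Adj u v := H.Adj u v ∧ u ∈ W ∧ v ∈ W
  symm := by
    constructor
    intro u v h
    exact ⟨h.1.symm, h.2.2, h.2.1⟩
  loopless := by
    constructor
    intro u h
    exact H.loopless.irrefl u h.1

lemma restrict_le {V : Type*} (H : SimpleGraph V) (W : Finset V) : restrict H W ≤ H :=
  fun _ _ h => h.1

lemma restrict_univ {V : Type*} [Fintype V] (H : SimpleGraph V) : restrict H univ = H := by
  ext u v
  simp [restrict]

lemma restrict_support {V : Type*} (H : SimpleGraph V) (W : Finset V) :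
    (restrict H W).support ⊆ (W : Set V) := by
  intro v hv
  obtain ⟨w, hw⟩ := hv
  exact hw.2.1

lemma edge_drop {V : Type*} [Fintype V] (H : SimpleGraph V) (W : Finset V) (v : V) :
    (restrict H W).edgeFinset.card ≤
      (restrict H (W.erase v)).edgeFinset.card + (restrict H W).degree v := by
  classical
  have hsub : (restrict H W).edgeFinset ⊆
      (restrict H (W.erase v)).edgeFinset ∪ (restrict H W).incidenceFinset v := by
    intro e he
    induction e with
    | _ x y =>
      rw [SimpleGraph.mem_edgeFinset, SimpleGraph.mem_edgeSet] at he
      by_cases hv : v = x ∨ v = y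
      · apply Finset.mem_union_right
        rw [SimpleGraph.mem_incidenceFinset]
        exact ⟨(SimpleGraph.mem_edgeSet _).mpr he, by
          rcases hv with h | h <;> simp [h, Sym2.mem_iff]⟩
      · push_neg at hv
        apply Finset.mem_union_left
        rw [SimpleGraph.mem_edgeFinset, SimpleGraph.mem_edgeSet]
        exact ⟨he.1, Finset.mem_erase.mpr ⟨Ne.symm hv.1, he.2.1⟩,
          Finset.mem_erase.mpr ⟨Ne.symm hv.2, he.2.2⟩⟩
  calc (restrict H W).edgeFinset.card
      ≤ ((restrict H (W.erase v)).edgeFinset ∪ (restrict H W).incidenceFinset v).card :=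
        Finset.card_le_card hsub
    _ ≤ (restrict H (W.erase v)).edgeFinset.card + ((restrict H W).incidenceFinset v).card :=
        Finset.card_union_le _ _
    _ = (restrict H (W.erase v)).edgeFinset.card + (restrict H W).degree v := by
        rw [SimpleGraph.card_incidenceFinset_eq_degree]

lemma exists_min_degree_subgraph {V : Type*} [Fintype V] (H : SimpleGraph V) (δ : ℕ)
    (h : δ * Fintype.card V < H.edgeFinset.card) :
    ∃ W : Finset V, W.Nonempty ∧ ∀ v ∈ W, δ < ((restrict H W).degree v) := by
  classical
  suffices haux : ∀ W : Finset V, δ * W.card < (restrict H W).edgeFinset.card →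
      ∃ W' : Finset V, W'.Nonempty ∧ ∀ v ∈ W', δ < ((restrict H W').degree v) by
    apply haux univ
    rw [restrict_univ]
    simpa using h
  intro W
  induction W using Finset.strongInduction with
  | _ W ih =>
    intro hW
    by_cases hall : ∀ v ∈ W, δ < (restrict H W).degree v
    · refine ⟨W, ?_, hall⟩
      -- W nonempty since it has an edge
      have hpos : 0 < (restrict H W).edgeFinset.card := by omega
      obtain ⟨e, he⟩ := Finset.card_pos.mp hpos
      induction e with
      | _ x y =>
        rw [SimpleGraph.mem_edgeFinset, SimpleGraph.mem_edgeSet] at he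
        exact ⟨x, he.2.1⟩
    · push_neg at hall
      obtain ⟨v, hvW, hvdeg⟩ := hall
      apply ih (W.erase v) (Finset.erase_ssubset hvW)
      have hdrop := edge_drop H W v
      have hcard : (W.erase v).card = W.card - 1 := Finset.card_erase_of_mem hvW
      have hWpos : 0 < W.card := Finset.card_pos.mpr ⟨v, hvW⟩
      have : δ * W.card = δ * (W.erase v).card + δ := by
        rw [hcard]
        have : W.card - 1 + 1 = W.card := by omega
        nlinarith [this]
      omega

lemma sym2_card_le_two {V : Type*} [Fintype V] [DecidableEq V] (e : Sym2 V) :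
    (univ.filter (fun z => z ∈ e)).card ≤ 2 := by
  induction e with
  | _ x y =>
    have hsub : (univ.filter (fun z => z ∈ s(x, y))) ⊆ {x, y} := by
      intro z hz
      simp only [Finset.mem_filter, Sym2.mem_iff] at hz
      simp only [Finset.mem_insert, Finset.mem_singleton]
      exact hz.2
    calc _ ≤ ({x, y} : Finset V).card := Finset.card_le_card hsub
      _ ≤ 2 := Finset.card_insert_le _ _ |>.trans (by simp)

lemma expansion_of_sparse {V : Type*} [Fintype V] (G K : SimpleGraph V) (hKG : K ≤ G)
    (L n : ℕ)
    (hsparse : ∀ A : Finset V, A.Nonempty → A.card ≤ 7 * n →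
      (G.edgeSet ∩ {e | ∀ x ∈ e, x ∈ A}).ncard < 2 * L * A.card)
    (hdeg : ∀ v ∈ K.support, 28 * L + 1 ≤ K.degree v) :
    ∀ U : Set V, U ⊆ K.support → U.ncard ≤ n → 6 * U.ncard ≤ ((SimpleGraph.extNb K U)).ncard := by
  classical
  intro U hUsupp hUn
  rcases U.eq_empty_or_nonempty with hU | hU
  · simp [hU]
  by_contra hcon
  push_neg at hcon
  set Ufin : Finset V := U.toFinset with hUfin
  set Nfin : Finset V := (SimpleGraph.extNb K U).toFinset with hNfin
  have hUcard : U.ncard = Ufin.card := Set.ncard_eq_toFinset_card' U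
  have hNcard : (SimpleGraph.extNb K U).ncard = Nfin.card := Set.ncard_eq_toFinset_card' _
  have hxpos : 0 < Ufin.card := by
    rw [← hUcard]
    exact Set.Nonempty.ncard_pos (Set.toFinite U) hU
  -- the neighborhood is small
  have hylt : Nfin.card + 1 ≤ 6 * Ufin.card := by
    rw [← hNcard, ← hUcard]; omega
  set A : Finset V := Ufin ∪ Nfin with hA
  have hAne : A.Nonempty := by
    obtain ⟨u, hu⟩ := hU
    exact ⟨u, Finset.mem_union_left _ (Set.mem_toFinset.mpr hu)⟩
  have hAcard : A.card ≤ Ufin.card + Nfin.card := Finset.card_union_le _ _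
  have hA7n : A.card ≤ 7 * n := by
    have : Ufin.card ≤ n := by rw [← hUcard]; exact hUn
    omega
  -- the incidence edges
  set P : Finset (Sym2 V) := Ufin.biUnion (fun u => K.incidenceFinset u) with hP
  have hPsub : ↑P ⊆ G.edgeSet ∩ {e | ∀ z ∈ e, z ∈ A} := by
    intro e he
    rw [Finset.mem_coe, hP, Finset.mem_biUnion] at he
    obtain ⟨u, huU, hue⟩ := he
    rw [SimpleGraph.mem_incidenceFinset] at hue
    obtain ⟨heK, huin⟩ := hue
    have huU' : u ∈ U := Set.mem_toFinset.mp huU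
    rw [Set.mem_inter_iff]
    constructor
    · exact SimpleGraph.edgeSet_mono hKG heK
    · -- every endpoint of e is in A
      intro z hze
      by_cases hzU : z ∈ U
      · exact Finset.mem_union_left _ (Set.mem_toFinset.mpr hzU)
      · apply Finset.mem_union_right
        rw [Set.mem_toFinset]
        refine ⟨hzU, u, huU', ?_⟩
        -- K.Adj u z since u, z ∈ e ∈ K.edgeSet and u ≠ z
        induction e with
        | _ a b =>
          rw [Sym2.mem_iff] at hze huin
          rw [SimpleGraph.mem_edgeSet] at heK
          rcases huin with rfl | rfl
          · rcases hze with rfl | rfl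
            · exact absurd huU' hzU
            · exact heK
          · rcases hze with rfl | rfl
            · exact heK.symm
            · exact absurd huU' hzU
  have hPcard : P.card < 2 * L * A.card := by
    calc P.card = (↑P : Set (Sym2 V)).ncard := (Set.ncard_coe_finset P).symm
      _ ≤ (G.edgeSet ∩ {e | ∀ z ∈ e, z ∈ A}).ncard :=
          Set.ncard_le_ncard hPsub (Set.toFinite _)
      _ < 2 * L * A.card := hsparse A hAne hA7n
  -- lower bound on sum of degrees
  have hdegsum : (28 * L + 1) * Ufin.card ≤ ∑ u ∈ Ufin, K.degree u := by
    have := Finset.card_nsmul_le_sum Ufin (fun u => K.degree u) (28 * L + 1)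
      (fun u hu => hdeg u (hUsupp (Set.mem_toFinset.mp hu)))
    simpa [mul_comm, smul_eq_mul] using this
  -- double counting
  have hdouble : ∑ u ∈ Ufin, K.degree u ≤ 2 * P.card := by
    have h1 : ∀ u ∈ Ufin, K.degree u = (P.filter (fun e => e ∈ K.incidenceFinset u)).card := by
      intro u hu
      rw [← SimpleGraph.card_incidenceFinset_eq_degree]
      congr 1
      apply Finset.Subset.antisymm
      · intro e he
        rw [Finset.mem_filter]
        exact ⟨Finset.subset_biUnion_of_mem (fun u => K.incidenceFinset u) hu he, he⟩
      · intro e he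
        rw [Finset.mem_filter] at he
        exact he.2
    rw [Finset.sum_congr rfl h1]
    have h2 : ∑ u ∈ Ufin, (P.filter (fun e => e ∈ K.incidenceFinset u)).card
        = ∑ e ∈ P, (Ufin.filter (fun u => e ∈ K.incidenceFinset u)).card := by
      simp_rw [Finset.card_filter]
      exact Finset.sum_comm
    rw [h2]
    have h3 : ∀ e ∈ P, (Ufin.filter (fun u => e ∈ K.incidenceFinset u)).card ≤ 2 := by
      intro e _
      have hsub : Ufin.filter (fun u => e ∈ K.incidenceFinset u) ⊆
          univ.filter (fun z => z ∈ e) := by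
        intro u hu
        rw [Finset.mem_filter] at hu ⊢
        refine ⟨Finset.mem_univ _, ?_⟩
        have := hu.2
        rw [SimpleGraph.mem_incidenceFinset] at this
        exact this.2
      exact (Finset.card_le_card hsub).trans (sym2_card_le_two e)
    calc ∑ e ∈ P, (Ufin.filter (fun u => e ∈ K.incidenceFinset u)).card
        ≤ ∑ _e ∈ P, 2 := Finset.sum_le_sum h3
      _ = 2 * P.card := by rw [Finset.sum_const, smul_eq_mul, mul_comm]
  -- combine into a contradiction
  have c1 : (28 * L + 1) * Ufin.card ≤ 2 * P.card := le_trans hdegsum hdouble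
  have c2 : 2 * P.card + 2 ≤ 2 * (2 * L * A.card) := by omega
  have c3 : 2 * L * A.card ≤ 2 * L * (Ufin.card + Nfin.card) :=
    Nat.mul_le_mul_left _ hAcard
  have c4 : 2 * L * (Ufin.card + Nfin.card) + 2 * L ≤ 2 * L * (7 * Ufin.card) := by
    have : Ufin.card + Nfin.card + 1 ≤ 7 * Ufin.card := by omega
    calc 2 * L * (Ufin.card + Nfin.card) + 2 * L
        = 2 * L * (Ufin.card + Nfin.card + 1) := by ring
      _ ≤ 2 * L * (7 * Ufin.card) := Nat.mul_le_mul_left _ this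
  have c5 : 2 * L * (7 * Ufin.card) = 14 * L * Ufin.card := by ring
  -- (28L+1) x + ... ≤ 28 L x
  nlinarith [c1, c2, c3, c4, c5, hxpos]

section Posa

variable {V : Type*} {H : SimpleGraph V}

/-- walks obtained from `P` by a sequence of Pósa rotations (fixing the start `v₀`). -/
inductive Rot {v₀ x₀ : V} (P : H.Walk v₀ x₀) : ∀ {x : V}, H.Walk v₀ x → Prop
  | base : Rot P P
  | step {v s x : V} (Q₁ : H.Walk v₀ v) (h₁ : H.Adj v s) (Q₂ : H.Walk s x)
      (h₂ : H.Adj v x) (hQ : Rot P (Q₁.append (SimpleGraph.Walk.cons h₁ Q₂))) :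
      Rot P (Q₁.append (SimpleGraph.Walk.cons h₂ Q₂.reverse))

/-- endpoints reachable by rotations -/
def rotEnds {v₀ x₀ : V} (P : H.Walk v₀ x₀) : Set V :=
  {y | ∃ Q : H.Walk v₀ y, Rot P Q}

lemma rot_support {v₀ x₀ x : V} {P : H.Walk v₀ x₀} {Q : H.Walk v₀ x} (h : Rot P Q) :
    Q.support.Perm P.support := by
  induction h with
  | base => exact List.Perm.refl _
  | step Q₁ h₁ Q₂ h₂ hQ ih =>
    rw [SimpleGraph.Walk.support_append] at ih ⊢
    rw [SimpleGraph.Walk.support_cons] at ih ⊢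
    simp only [List.tail_cons] at ih ⊢
    rw [SimpleGraph.Walk.support_reverse]
    exact ((Q₂.support.reverse_perm).append_left Q₁.support).trans ih

lemma rot_isPath {v₀ x₀ x : V} {P : H.Walk v₀ x₀} {Q : H.Walk v₀ x}
    (hP : P.IsPath) (h : Rot P Q) : Q.IsPath :=
  SimpleGraph.Walk.IsPath.mk' ((rot_support h).nodup_iff.mpr hP.support_nodup)

lemma rot_end_mem {v₀ x₀ x : V} {P : H.Walk v₀ x₀} {Q : H.Walk v₀ x} (h : Rot P Q) :
    x ∈ rotEnds P := ⟨Q, h⟩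

lemma rot_edges {v₀ x₀ x : V} {P : H.Walk v₀ x₀} {Q : H.Walk v₀ x} (h : Rot P Q) :
    (∀ e ∈ P.edges, e ∈ Q.edges ∨ ∃ y ∈ rotEnds P, y ∈ e) ∧
    (∀ e ∈ Q.edges, e ∈ P.edges ∨ ∃ y ∈ rotEnds P, y ∈ e) := by
  induction h with
  | base => exact ⟨fun e he => Or.inl he, fun e he => Or.inl he⟩
  | @step v s x Q₁ h₁ Q₂ h₂ hQ ih =>
    have hxR : x ∈ rotEnds P := rot_end_mem hQ
    have hsR : s ∈ rotEnds P := rot_end_mem (Rot.step Q₁ h₁ Q₂ h₂ hQ)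
    have hedges : (Q₁.append (SimpleGraph.Walk.cons h₁ Q₂)).edges
        = Q₁.edges ++ (s(v, s) :: Q₂.edges) := by
      rw [SimpleGraph.Walk.edges_append, SimpleGraph.Walk.edges_cons]
    have hedges' : (Q₁.append (SimpleGraph.Walk.cons h₂ Q₂.reverse)).edges
        = Q₁.edges ++ (s(v, x) :: Q₂.edges.reverse) := by
      rw [SimpleGraph.Walk.edges_append, SimpleGraph.Walk.edges_cons,
        SimpleGraph.Walk.edges_reverse]
    constructor
    · intro e he
      rcases ih.1 e he with hmem | hR
      · rw [hedges] at hmem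
        rw [hedges']
        rcases List.mem_append.mp hmem with h1 | h2
        · exact Or.inl (List.mem_append.mpr (Or.inl h1))
        · rcases List.mem_cons.mp h2 with rfl | h3
          · exact Or.inr ⟨s, hsR, by simp [Sym2.mem_iff]⟩
          · exact Or.inl (List.mem_append.mpr (Or.inr (List.mem_cons.mpr
              (Or.inr (List.mem_reverse.mpr h3)))))
      · exact Or.inr hR
    · intro e he
      rw [hedges'] at he
      rcases List.mem_append.mp he with h1 | h2
      · exact ih.2 e (by rw [hedges]; exact List.mem_append.mpr (Or.inl h1))
      · rcases List.mem_cons.mp h2 with rfl | h3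
        · exact Or.inr ⟨x, hxR, by simp [Sym2.mem_iff]⟩
        · exact ih.2 e (by
            rw [hedges]
            exact List.mem_append.mpr (Or.inr (List.mem_cons.mpr
              (Or.inr (List.mem_reverse.mp h3)))))

lemma mem_support_of_mem_edge {u w z : V} (q : H.Walk u w) (e : Sym2 V)
    (he : e ∈ q.edges) (hz : z ∈ e) : z ∈ q.support := by
  induction e with
  | _ a b =>
    rcases Sym2.mem_iff.mp hz with rfl | rfl
    · exact q.fst_mem_support_of_mem_edges he
    · exact q.snd_mem_support_of_mem_edges he

lemma incid_card [Fintype V] [DecidableEq V] : ∀ {u w : V} (q : H.Walk u w), q.IsPath → ∀ z : V,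
    (q.edges.toFinset.filter (fun e => z ∈ e)).card ≤ if z = u then 1 else 2 := by
  intro u w q
  induction q with
  | nil =>
    intro _ z
    simp only [SimpleGraph.Walk.edges_nil, List.toFinset_nil, Finset.filter_empty,
      Finset.card_empty]
    split <;> omega
  | @cons a b c h q ih =>
    intro hq z
    have hq' : q.IsPath := (SimpleGraph.Walk.cons_isPath_iff h q).mp hq |>.1
    have ha : a ∉ q.support := (SimpleGraph.Walk.cons_isPath_iff h q).mp hq |>.2
    rw [SimpleGraph.Walk.edges_cons, List.toFinset_cons]
    rw [Finset.filter_insert]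
    by_cases hza : z = a
    · subst hza
      have hmem : z ∈ s(z, b) := by simp [Sym2.mem_iff]
      rw [if_pos hmem]
      have hempty : q.edges.toFinset.filter (fun e => z ∈ e) = ∅ := by
        rw [Finset.filter_eq_empty_iff]
        intro e he hze
        exact ha (mem_support_of_mem_edge q e (List.mem_toFinset.mp he) hze)
      rw [hempty]
      simp
    · rw [if_neg hza]
      by_cases hzb : z = b
      · subst hzb
        have hmem : z ∈ s(a, z) := by simp [Sym2.mem_iff]
        rw [if_pos hmem]
        have := ih hq' z
        rw [if_pos rfl] at this
        calc (insert s(a, z) (q.edges.toFinset.filter (fun e => z ∈ e))).card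
            ≤ (q.edges.toFinset.filter (fun e => z ∈ e)).card + 1 := Finset.card_insert_le _ _
          _ ≤ 2 := by omega
      · have hmem : z ∉ s(a, b) := by
          rw [Sym2.mem_iff]
          push_neg
          exact ⟨hza, hzb⟩
        rw [if_neg hmem]
        have := ih hq' z
        rw [if_neg hzb] at this
        exact this

lemma three_distinct {α : Type*} [DecidableEq α] {S : Finset α} (h : S.card ≤ 2)
    {e₁ e₂ e₃ : α} (h1 : e₁ ∈ S) (h2 : e₂ ∈ S) (h3 : e₃ ∈ S)
    (h12 : e₁ ≠ e₂) (h13 : e₁ ≠ e₃) (h23 : e₂ ≠ e₃) : False := by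
  have hsub : ({e₁, e₂, e₃} : Finset α) ⊆ S := by
    intro x hx
    simp only [Finset.mem_insert, Finset.mem_singleton] at hx
    rcases hx with rfl | rfl | rfl <;> assumption
  have hc : ({e₁, e₂, e₃} : Finset α).card = 3 := by
    rw [Finset.card_insert_of_notMem (by simp [h12, h13]),
      Finset.card_insert_of_notMem (by simp [h23]), Finset.card_singleton]
  have := Finset.card_le_card hsub
  omega

lemma sym2_eq_of_mem {V : Type*} {e : Sym2 V} {y z : V}
    (hy : y ∈ e) (hz : z ∈ e) (hyz : y ≠ z) : e = s(y, z) := by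
  induction e with
  | _ a b =>
    rw [Sym2.mem_iff] at hy hz
    rcases hy with rfl | rfl <;> rcases hz with rfl | rfl
    · exact absurd rfl hyz
    · rfl
    · exact Sym2.eq_swap
    · exact absurd rfl hyz

set_option maxHeartbeats 1000000 in
lemma posa {V : Type*} [Fintype V] [DecidableEq V] (H : SimpleGraph V) (k : ℕ) (hk : 1 ≤ k)
    (hedge : ∃ u v, H.Adj u v)
    (hexp : ∀ U : Set V, U ⊆ H.support → U.ncard ≤ k →
      6 * U.ncard ≤ (SimpleGraph.extNb H U).ncard) :
    ∃ (u w : V) (p : H.Walk u w), p.IsPath ∧ 7 * k ≤ p.support.length := by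
  classical
  set S : Set ℕ := {l | ∃ u w : V, ∃ p : H.Walk u w, p.IsPath ∧ p.length = l} with hS
  obtain ⟨ue, ve, he⟩ := hedge
  have hpe : (SimpleGraph.Walk.cons he SimpleGraph.Walk.nil).IsPath := by
    rw [SimpleGraph.Walk.cons_isPath_iff]
    refine ⟨SimpleGraph.Walk.IsPath.nil, ?_⟩
    simp [he.ne]
  have h1S : 1 ∈ S := ⟨ue, ve, SimpleGraph.Walk.cons he SimpleGraph.Walk.nil, hpe, by simp⟩
  have hSbdd : BddAbove S := ⟨Fintype.card V, fun l hl => by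
    obtain ⟨u, w, p, hp, rfl⟩ := hl
    exact hp.length_lt.le⟩
  have hSne : S.Nonempty := ⟨1, h1S⟩
  have hmemS := Nat.sSup_mem hSne hSbdd
  obtain ⟨u₀, w₀, P, hP, hPlen⟩ := hmemS
  have hmax : ∀ {u w : V} (q : H.Walk u w), q.IsPath → q.length ≤ sSup S :=
    fun q hq => le_csSup hSbdd ⟨_, _, q, hq, rfl⟩
  have hP1 : 1 ≤ P.length := by
    have := le_csSup hSbdd h1S
    omega
  set R := rotEnds P with hR
  have hw₀R : w₀ ∈ R := rot_end_mem Rot.base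
  have rot_len : ∀ {x : V} {Q : H.Walk u₀ x}, Rot P Q → Q.length = P.length := by
    intro x Q hQ
    have hpm := (rot_support hQ).length_eq
    rw [SimpleGraph.Walk.length_support, SimpleGraph.Walk.length_support] at hpm
    omega
  have hRsupp : R ⊆ H.support := by
    intro y hy
    obtain ⟨Q, hQ⟩ := hy
    have hQpath := rot_isPath hP hQ
    have hQlen : 1 ≤ Q.length := by rw [rot_len hQ]; omega
    have hne : u₀ ≠ y := by
      rintro rfl
      rw [(SimpleGraph.Walk.isPath_iff_eq_nil (p := Q)).mp hQpath] at hQlen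
      simp at hQlen
    obtain ⟨t, hadj, Q', hQ'⟩ := SimpleGraph.Walk.exists_eq_cons_of_ne (Ne.symm hne) Q.reverse
    rw [SimpleGraph.mem_support]
    exact ⟨t, hadj⟩
  have hRP : ∀ y ∈ R, y ∈ P.support := by
    intro y hy
    obtain ⟨Q, hQ⟩ := hy
    exact (rot_support hQ).mem_iff.mp Q.end_mem_support
  have hAdjP : ∀ (x v : V), x ∈ R → H.Adj x v → v ∈ P.support := by
    intro x v hx hadj
    obtain ⟨Q, hQ⟩ := hx
    have hQpath := rot_isPath hP hQ
    by_cases hvQ : v ∈ Q.support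
    · exact (rot_support hQ).mem_iff.mp hvQ
    · exfalso
      have hcpath : (Q.concat hadj).IsPath := by
        apply SimpleGraph.Walk.IsPath.mk'
        rw [SimpleGraph.Walk.support_concat]
        rw [List.nodup_append']
        exact ⟨hQpath.support_nodup, List.nodup_singleton v,
          fun a ha hb => by
            rw [List.mem_singleton] at hb
            subst hb
            exact hvQ ha⟩
      have hle := hmax (Q.concat hadj) hcpath
      rw [SimpleGraph.Walk.length_concat, rot_len hQ, hPlen] at hle
      omega
  set PN : Set V := {y | ∃ z ∈ R, ∃ e ∈ P.edges, y ∈ e ∧ z ∈ e ∧ y ≠ z} with hPN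
  -- main claim: external neighbourhood of R is inside {u₀} ∪ PN
  have hNR : SimpleGraph.extNb H R ⊆ insert u₀ PN := by
    intro v hv
    obtain ⟨hvR, x, hxR, hxv⟩ := hv
    by_cases hvu : v = u₀
    · exact Set.mem_insert_iff.mpr (Or.inl hvu)
    apply Set.mem_insert_iff.mpr ∘ Or.inr
    obtain ⟨Q, hQ⟩ := hxR
    have hQpath := rot_isPath hP hQ
    have hvQ : v ∈ Q.support := (rot_support hQ).mem_iff.mpr (hAdjP x v ⟨Q, hQ⟩ hxv)
    have hvx : v ≠ x := fun h => hvR (h ▸ (⟨Q, hQ⟩ : x ∈ R))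
    have hspec := Q.take_spec hvQ
    obtain ⟨sv, h₁, Q₂, hQd⟩ := SimpleGraph.Walk.exists_eq_cons_of_ne hvx (Q.dropUntil v hvQ)
    have hQ2 := hQ
    rw [← hspec, hQd] at hQ2
    have hQ' := Rot.step (Q.takeUntil v hvQ) h₁ Q₂ hxv.symm hQ2
    have hsvR : sv ∈ R := rot_end_mem hQ'
    have hevs : s(v, sv) ∈ Q.edges := by
      rw [← hspec, hQd, SimpleGraph.Walk.edges_append, SimpleGraph.Walk.edges_cons]
      exact List.mem_append.mpr (Or.inr (List.mem_cons_self))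
    by_cases hcase : ∃ e ∈ P.edges, v ∈ e ∧ ∃ z ∈ R, z ∈ e ∧ z ≠ v
    · obtain ⟨e, heP, hve, z, hzR, hze, hzv⟩ := hcase
      exact ⟨z, hzR, e, heP, hve, hze, Ne.symm hzv⟩
    exfalso
    push_neg at hcase
    -- hcase : ∀ e ∈ P.edges, v ∈ e → ∀ z ∈ R, z ∈ e → z = v
    have hvP : v ∈ P.support := hAdjP x v ⟨Q, hQ⟩ hxv
    have hvw₀ : v ≠ w₀ := fun h => hvR (h ▸ hw₀R)
    have hPspec := P.take_spec hvP
    obtain ⟨sp, hsp, P₂, hPdeq⟩ := SimpleGraph.Walk.exists_eq_cons_of_ne hvw₀ (P.dropUntil v hvP)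
    have hvu' : v ≠ u₀ := hvu
    obtain ⟨t, hvt, P₀, hP₁rev⟩ := SimpleGraph.Walk.exists_eq_cons_of_ne hvu' (P.takeUntil v hvP).reverse
    have he₁tk : s(v, t) ∈ (P.takeUntil v hvP).edges := by
      rw [← List.mem_reverse, ← SimpleGraph.Walk.edges_reverse, hP₁rev,
        SimpleGraph.Walk.edges_cons]
      exact List.mem_cons_self
    have he₁P : s(v, t) ∈ P.edges := SimpleGraph.Walk.edges_takeUntil_subset P hvP he₁tk
    have he₂P : s(v, sp) ∈ P.edges := by
      rw [← hPspec, SimpleGraph.Walk.edges_append, hPdeq, SimpleGraph.Walk.edges_cons]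
      exact List.mem_append.mpr (Or.inr (List.mem_cons_self))
    have htP₁ : t ∈ (P.takeUntil v hvP).support :=
      mem_support_of_mem_edge _ _ he₁tk (by simp [Sym2.mem_iff])
    have hspP₂ : sp ∈ P₂.support := P₂.start_mem_support
    have hnd : ((P.takeUntil v hvP).support ++ P₂.support).Nodup := by
      have hnodup := hP.support_nodup
      rw [← hPspec, SimpleGraph.Walk.support_append, hPdeq, SimpleGraph.Walk.support_cons] at hnodup
      simpa using hnodup
    have htsp : t ≠ sp := by
      intro h
      subst h
      rcases List.nodup_append'.mp hnd with ⟨_, _, hdisj⟩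
      exact hdisj htP₁ hspP₂
    have ht_ne_v : t ≠ v := hvt.ne'
    have hsp_ne_v : sp ≠ v := hsp.ne'
    have he₁₂ : s(v, t) ≠ s(v, sp) := by
      intro h
      rcases Sym2.eq_iff.mp h with ⟨_, h'⟩ | ⟨h', _⟩
      · exact htsp h'
      · exact hsp_ne_v h'.symm
    have htR : t ∉ R := fun htR =>
      ht_ne_v (hcase _ he₁P (by simp [Sym2.mem_iff]) t htR (by simp [Sym2.mem_iff]))
    have hspR : sp ∉ R := fun hspR =>
      hsp_ne_v (hcase _ he₂P (by simp [Sym2.mem_iff]) sp hspR (by simp [Sym2.mem_iff]))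
    have he₁Q : s(v, t) ∈ Q.edges := by
      rcases (rot_edges hQ).1 _ he₁P with h | ⟨y, hyR, hy⟩
      · exact h
      · rcases Sym2.mem_iff.mp hy with rfl | rfl
        · exact absurd hyR hvR
        · exact absurd hyR htR
    have he₂Q : s(v, sp) ∈ Q.edges := by
      rcases (rot_edges hQ).1 _ he₂P with h | ⟨y, hyR, hy⟩
      · exact h
      · rcases Sym2.mem_iff.mp hy with rfl | rfl
        · exact absurd hyR hvR
        · exact absurd hyR hspR
    -- the three distinct edges at v inside the path Q
    have hcardQ := incid_card Q hQpath v
    rw [if_neg hvu'] at hcardQ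
    have hmem1 : s(v, t) ∈ Q.edges.toFinset.filter (fun e => v ∈ e) :=
      Finset.mem_filter.mpr ⟨List.mem_toFinset.mpr he₁Q, by simp [Sym2.mem_iff]⟩
    have hmem2 : s(v, sp) ∈ Q.edges.toFinset.filter (fun e => v ∈ e) :=
      Finset.mem_filter.mpr ⟨List.mem_toFinset.mpr he₂Q, by simp [Sym2.mem_iff]⟩
    have hmem3 : s(v, sv) ∈ Q.edges.toFinset.filter (fun e => v ∈ e) :=
      Finset.mem_filter.mpr ⟨List.mem_toFinset.mpr hevs, by simp [Sym2.mem_iff]⟩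
    have hsv_ne_t : s(v, t) ≠ s(v, sv) := by
      intro h
      rcases Sym2.eq_iff.mp h with ⟨_, h'⟩ | ⟨h', h''⟩
      · exact htR (h' ▸ hsvR)
      · exact ht_ne_v h'' 
    have hsv_ne_sp : s(v, sp) ≠ s(v, sv) := by
      intro h
      rcases Sym2.eq_iff.mp h with ⟨_, h'⟩ | ⟨h', h''⟩
      · exact hspR (h' ▸ hsvR)
      · exact hsp_ne_v h'' 
    exact three_distinct hcardQ hmem1 hmem2 hmem3 he₁₂ hsv_ne_t hsv_ne_sp
  -- cardinality bound for PN
  have hPNcard : PN.ncard ≤ 2 * R.ncard := by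
    have hsub : PN.toFinset ⊆ R.toFinset.biUnion (fun z =>
        univ.filter (fun y => ∃ e ∈ P.edges, y ∈ e ∧ z ∈ e ∧ y ≠ z)) := by
      intro y hy
      rw [Set.mem_toFinset] at hy
      obtain ⟨z, hzR, e, he, hye, hze, hyz⟩ := hy
      rw [Finset.mem_biUnion]
      exact ⟨z, Set.mem_toFinset.mpr hzR,
        Finset.mem_filter.mpr ⟨Finset.mem_univ _, e, he, hye, hze, hyz⟩⟩
    have hEz : ∀ z : V, (univ.filter (fun y => ∃ e ∈ P.edges, y ∈ e ∧ z ∈ e ∧ y ≠ z)).card ≤ 2 := by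
      intro z
      have hinto : ∀ y ∈ univ.filter (fun y => ∃ e ∈ P.edges, y ∈ e ∧ z ∈ e ∧ y ≠ z),
          s(y, z) ∈ P.edges.toFinset.filter (fun e => z ∈ e) := by
        intro y hy
        rw [Finset.mem_filter] at hy
        obtain ⟨_, e, heP, hye, hze, hyz⟩ := hy
        rw [Finset.mem_filter]
        refine ⟨List.mem_toFinset.mpr ?_, by simp [Sym2.mem_iff]⟩
        rwa [← sym2_eq_of_mem hye hze hyz]
      have hinj : ∀ y₁ ∈ univ.filter (fun y => ∃ e ∈ P.edges, y ∈ e ∧ z ∈ e ∧ y ≠ z),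
          ∀ y₂ ∈ univ.filter (fun y => ∃ e ∈ P.edges, y ∈ e ∧ z ∈ e ∧ y ≠ z),
          s(y₁, z) = s(y₂, z) → y₁ = y₂ := by
        intro y₁ h₁ y₂ h₂ heq
        rw [Finset.mem_filter] at h₁ h₂
        obtain ⟨_, _, _, _, _, hy₁z⟩ := h₁
        rcases Sym2.eq_iff.mp heq with ⟨h, _⟩ | ⟨h, h'⟩
        · exact h
        · exact absurd h hy₁z
      have hc := Finset.card_le_card_of_injOn (fun y => s(y, z)) hinto hinj
      have hbound := incid_card P hP z
      have : (P.edges.toFinset.filter (fun e => z ∈ e)).card ≤ 2 := by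
        rcases eq_or_ne z u₀ with h | h
        · rw [if_pos h] at hbound; omega
        · rw [if_neg h] at hbound; omega
      omega
    calc PN.ncard = PN.toFinset.card := Set.ncard_eq_toFinset_card' _
      _ ≤ _ := Finset.card_le_card hsub
      _ ≤ ∑ z ∈ R.toFinset, (univ.filter (fun y => ∃ e ∈ P.edges, y ∈ e ∧ z ∈ e ∧ y ≠ z)).card :=
          Finset.card_biUnion_le
      _ ≤ ∑ _z ∈ R.toFinset, 2 := Finset.sum_le_sum (fun z _ => hEz z)
      _ = 2 * R.ncard := by
          rw [Finset.sum_const, smul_eq_mul, ← Set.ncard_eq_toFinset_card']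
          ring
  -- R must be large
  have hRk : k < R.ncard := by
    by_contra hle
    push_neg at hle
    have h6 := hexp R hRsupp hle
    have hub : (SimpleGraph.extNb H R).ncard ≤ PN.ncard + 1 := by
      calc (SimpleGraph.extNb H R).ncard ≤ (insert u₀ PN).ncard :=
            Set.ncard_le_ncard hNR (Set.toFinite _)
        _ ≤ PN.ncard + 1 := Set.ncard_insert_le _ _
    have hR1 : 1 ≤ R.ncard := by
      have : R.Nonempty := ⟨w₀, hw₀R⟩
      have := Set.Nonempty.ncard_pos (Set.toFinite R) this
      omega
    omega
  -- extract R₀ of size exactly k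
  obtain ⟨R₀, hR₀sub, hR₀card⟩ := Set.exists_subset_card_eq (le_of_lt hRk : k ≤ R.ncard)
  have h6k := hexp R₀ (hR₀sub.trans hRsupp) (le_of_eq hR₀card)
  set PS : Set V := {y | y ∈ P.support} with hPS
  have hsub1 : R₀ ⊆ PS := fun y hy => hRP y (hR₀sub hy)
  have hsub2 : SimpleGraph.extNb H R₀ ⊆ PS := by
    intro v hv
    obtain ⟨hvnot, x, hxR₀, hxv⟩ := hv
    exact hAdjP x v (hR₀sub hxR₀) hxv
  have hdisj : Disjoint R₀ (SimpleGraph.extNb H R₀) :=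
    Set.disjoint_left.mpr (fun y hy hv => hv.1 hy)
  have hun : (R₀ ∪ SimpleGraph.extNb H R₀).ncard
      = R₀.ncard + (SimpleGraph.extNb H R₀).ncard :=
    Set.ncard_union_eq hdisj (Set.toFinite _) (Set.toFinite _)
  have hPScard : 7 * k ≤ PS.ncard := by
    have hss : (R₀ ∪ SimpleGraph.extNb H R₀) ⊆ PS := Set.union_subset hsub1 hsub2
    have hle := Set.ncard_le_ncard hss (Set.toFinite _)
    rw [hun, hR₀card] at hle
    omega
  have hPSlen : PS.ncard = P.support.length := by
    have h1 : PS = ↑(P.support.toFinset) := by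
      ext y
      simp [hPS]
    rw [h1, Set.ncard_coe_finset, List.toFinset_card_of_nodup hP.support_nodup]
  exact ⟨u₀, w₀, P, hP, by omega⟩

end Posa


/-! ### Part F: numerics -/

lemma exp_four_lt : Real.exp 4 < 55 := by
  have h := Real.exp_one_lt_d9
  have h4 : Real.exp 4 = (Real.exp 1) ^ (4:ℕ) := by
    rw [← Real.exp_nat_mul]
    norm_num
  rw [h4]
  have hpos : (0:ℝ) < Real.exp 1 := Real.exp_pos 1
  have h2 : Real.exp 1 ^ (2:ℕ) < 7.3890561 := by nlinarith [h, hpos]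
  have h42 : Real.exp 1 ^ (4:ℕ) = (Real.exp 1 ^ (2:ℕ)) ^ (2:ℕ) := by ring
  rw [h42]
  nlinarith [h2, pow_pos hpos 2]

lemma log_two_ge : (2:ℝ)/3 ≤ Real.log 2 := by
  rw [Real.le_log_iff_exp_le (by norm_num : (0:ℝ) < 2)]
  by_contra hc
  push_neg at hc
  have h3 : (Real.exp (2/3)) ^ (3:ℕ) = Real.exp 2 := by
    rw [← Real.exp_nat_mul]
    norm_num
  have hpos : (0:ℝ) < Real.exp (2/3) := Real.exp_pos _
  have h8 : (8:ℝ) < Real.exp 2 := by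
    rw [← h3]
    have hsq : (4:ℝ) < Real.exp (2/3) ^ (2:ℕ) := by nlinarith [hc, hpos]
    have : Real.exp (2/3) ^ (3:ℕ) = Real.exp (2/3) ^ (2:ℕ) * Real.exp (2/3) := by ring
    rw [this]
    nlinarith [hsq, hc, hpos]
  have : Real.exp 2 ≤ Real.exp 4 := Real.exp_le_exp.mpr (by norm_num)
  have := exp_four_lt
  have h2 : Real.exp 2 = (Real.exp 1) ^ (2:ℕ) := by
    rw [← Real.exp_nat_mul]; norm_num
  have he := Real.exp_one_lt_d9
  have hpos1 : (0:ℝ) < Real.exp 1 := Real.exp_pos 1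
  nlinarith [h8, h2, he, hpos1]

lemma log_nine_half : (4:ℝ)/3 ≤ Real.log (9/2) := by
  rw [Real.le_log_iff_exp_le (by norm_num : (0:ℝ) < 9/2)]
  by_contra hc
  push_neg at hc
  have h3 : (Real.exp (4/3)) ^ (3:ℕ) = Real.exp 4 := by
    rw [← Real.exp_nat_mul]
    norm_num
  have hpos : (0:ℝ) < Real.exp (4/3) := Real.exp_pos _
  have h8 : (91:ℝ) < Real.exp 4 := by
    rw [← h3]
    have hsq : (81:ℝ)/4 < Real.exp (4/3) ^ (2:ℕ) := by nlinarith [hc, hpos]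
    have : Real.exp (4/3) ^ (3:ℕ) = Real.exp (4/3) ^ (2:ℕ) * Real.exp (4/3) := by ring
    rw [this]
    nlinarith [hsq, hc, hpos]
  have := exp_four_lt
  linarith

lemma final_numeric (r L : ℕ) (hr : 2 ≤ r) (hL6 : 6 * Real.log r ≤ (L:ℝ)) :
    9072 * (r:ℝ) * (2/9) ^ (2 * L) ≤ 1/2 := by
  have hr2 : (2:ℝ) ≤ (r:ℝ) := by exact_mod_cast hr
  have hrpos : (0:ℝ) < r := by linarith
  have hlogr : (0:ℝ) < Real.log r := Real.log_pos (by linarith)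
  have hL0 : (0:ℝ) ≤ (L:ℝ) := by positivity
  -- (9/2)^(2L) ≥ r^16
  have hexp1 : ((9:ℝ)/2) ^ (2*L) = Real.exp (((2*L : ℕ):ℝ) * Real.log (9/2)) := by
    rw [Real.exp_nat_mul, Real.exp_log (by norm_num : (0:ℝ) < 9/2)]
  have hexp2 : (r:ℝ) ^ (16:ℕ) = Real.exp (((16:ℕ):ℝ) * Real.log r) := by
    rw [Real.exp_nat_mul, Real.exp_log hrpos]
  have hlog92 := log_nine_half
  have hcompare : ((16:ℕ):ℝ) * Real.log r ≤ ((2*L:ℕ):ℝ) * Real.log (9/2) := by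
    push_cast
    have h1 : (4:ℝ)/3 * (L:ℝ) ≤ Real.log (9/2) * L :=
      mul_le_mul_of_nonneg_right hlog92 hL0
    nlinarith [hL6, hlogr, h1]
  have hr16 : (r:ℝ) ^ (16:ℕ) ≤ ((9:ℝ)/2) ^ (2*L) := by
    rw [hexp1, hexp2]
    exact Real.exp_le_exp.mpr hcompare
  have hr16' : 32768 * (r:ℝ) ≤ (r:ℝ) ^ (16:ℕ) := by
    have h15 : (2:ℝ)^(15:ℕ) ≤ (r:ℝ)^(15:ℕ) := pow_le_pow_left₀ (by norm_num) hr2 _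
    have : (r:ℝ) ^ (16:ℕ) = (r:ℝ)^(15:ℕ) * r := by ring
    rw [this]
    have h2 : (2:ℝ)^(15:ℕ) = 32768 := by norm_num
    nlinarith [h15, hrpos, h2]
  have hbig : 32768 * (r:ℝ) ≤ ((9:ℝ)/2) ^ (2*L) := le_trans hr16' hr16
  have hbpos : (0:ℝ) < ((9:ℝ)/2) ^ (2*L) := by positivity
  have h29 : ((2:ℝ)/9) ^ (2*L) = (((9:ℝ)/2) ^ (2*L))⁻¹ := by
    rw [← inv_pow]
    norm_num
  rw [h29]
  rw [mul_inv_le_iff₀ hbpos]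
  nlinarith [hbig, hrpos]

lemma edgecount_numeric (r L n : ℕ) (hr : 2 ≤ r) (hL : (L:ℝ) ≤ 6 * Real.log r + 1) :
    ((56 * r * L * (21168 * r * n) : ℕ) : ℝ) ≤ 10^7 * (r:ℝ)^2 * Real.log r * n := by
  have hr2 : (2:ℝ) ≤ (r:ℝ) := by exact_mod_cast hr
  have hlogr : (2:ℝ)/3 ≤ Real.log r := by
    calc (2:ℝ)/3 ≤ Real.log 2 := log_two_ge
      _ ≤ Real.log r := Real.log_le_log (by norm_num) hr2
  have hL8 : (L:ℝ) ≤ 8 * Real.log r := by nlinarith [hL, hlogr]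
  push_cast
  have hrn : (0:ℝ) ≤ (r:ℝ)^2 * n := by positivity
  have key : (L:ℝ) * ((r:ℝ)^2 * n) ≤ 8 * Real.log r * ((r:ℝ)^2 * n) :=
    mul_le_mul_of_nonneg_right hL8 hrn
  nlinarith [key, hrn, hlogr]

lemma key_ineq (r n L N D m : ℕ) (hr : 2 ≤ r) (hn : 1 ≤ n)
    (hL1 : 1 ≤ L)
    (hL6 : 6 * Real.log r ≤ (L:ℝ))
    (hN : N = 21168 * r * n) (hD : D = 56 * r * L) (hm : m = D * N) :
    ∀ a : ℕ, 1 ≤ a → a ≤ 7 * n →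
      ((N.choose a : ℕ) : ℝ) * (((a ^ 2).choose (2 * L * a) : ℕ) : ℝ)
        * (2 * (m:ℝ) / (N.choose 2)) ^ (2 * L * a) ≤ (1 / 2) ^ a := by
  intro a ha has
  have hrpos : 0 < r := by omega
  have hNpos : 0 < N := by rw [hN]; positivity
  have hN2 : 2 ≤ N := by rw [hN]; nlinarith [hrpos, hn]
  have hDpos : 0 < D := by rw [hD]; positivity
  have hb1 : 1 ≤ 2 * L * a := by
    have := Nat.mul_pos (Nat.mul_pos (by omega : 0 < 2) (by omega : 0 < L)) (by omega : 0 < a)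
    omega
  have haR : (1:ℝ) ≤ (a:ℝ) := by exact_mod_cast ha
  have hLR : (1:ℝ) ≤ (L:ℝ) := by exact_mod_cast hL1
  have hNR : (2:ℝ) ≤ (N:ℝ) := by exact_mod_cast hN2
  have hDR : (1:ℝ) ≤ (D:ℝ) := by exact_mod_cast hDpos
  -- the binomial coefficient (N choose 2) as a real
  have hM2 : 2 * (N.choose 2) = N * (N - 1) := by
    rw [Nat.choose_two_right]
    apply Nat.mul_div_cancel'
    rcases Nat.even_or_odd N with h | h
    · exact Dvd.dvd.mul_right h.two_dvd _
    · have : Even (N - 1) := Nat.Odd.sub_odd h odd_one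
      exact Dvd.dvd.mul_left this.two_dvd _
  have hMr : ((N.choose 2 : ℕ) : ℝ) = (N:ℝ) * ((N:ℝ) - 1) / 2 := by
    have hcast : (2:ℝ) * ((N.choose 2 : ℕ) : ℝ) = (N:ℝ) * ((N:ℝ) - 1) := by
      have h1 : ((N - 1 : ℕ) : ℝ) = (N:ℝ) - 1 := by
        have h2 : 1 ≤ N := by omega
        push_cast [h2]
        ring
      rw [← h1]
      exact_mod_cast hM2
    linarith
  have hMpos : (0:ℝ) < ((N.choose 2 : ℕ) : ℝ) := by
    have := Nat.choose_pos (by omega : 2 ≤ N)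
    exact_mod_cast this
  -- bound the edge probability ratio
  have hfrac : 2 * (m:ℝ) / (N.choose 2) ≤ 8 * D / N := by
    rw [div_le_div_iff₀ hMpos (by positivity : (0:ℝ) < (N:ℝ))]
    have hmR : (m:ℝ) = (D:ℝ) * N := by exact_mod_cast hm
    rw [hmR, hMr]
    nlinarith [hNR, hDR, sq_nonneg ((N:ℝ))]
  have hfrac0 : (0:ℝ) ≤ 2 * (m:ℝ) / (N.choose 2) := by positivity
  -- choose bounds
  have hχ1 : ((N.choose a : ℕ) : ℝ) ≤ (3 * N / a) ^ a := choose_le_ratio_pow N a ha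
  have hχ2 : (((a ^ 2).choose (2 * L * a) : ℕ) : ℝ)
      ≤ (3 * (a^2:ℕ) / (2 * L * a : ℕ)) ^ (2 * L * a) := choose_le_ratio_pow (a^2) (2*L*a) hb1
  -- combine
  have hstep1 : ((N.choose a : ℕ) : ℝ) * (((a ^ 2).choose (2 * L * a) : ℕ) : ℝ)
        * (2 * (m:ℝ) / (N.choose 2)) ^ (2 * L * a)
      ≤ (3 * N / a) ^ a * ((3 * (a^2:ℕ) / (2 * L * a : ℕ)) ^ (2 * L * a)
          * (8 * (D:ℝ) / N) ^ (2 * L * a)) := by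
    have hp1 : (0:ℝ) ≤ ((N.choose a : ℕ) : ℝ) := by positivity
    have hp2 : (0:ℝ) ≤ (((a ^ 2).choose (2 * L * a) : ℕ) : ℝ) := by positivity
    have hp3 : (2 * (m:ℝ) / (N.choose 2)) ^ (2 * L * a) ≤ (8 * (D:ℝ) / N) ^ (2 * L * a) :=
      pow_le_pow_left₀ hfrac0 hfrac _
    have hp4 : (0:ℝ) ≤ (3 * (N:ℝ) / a) ^ a := by positivity
    have hp5 : (0:ℝ) ≤ (3 * (a^2:ℕ) / (2 * L * a : ℕ) : ℝ) ^ (2 * L * a) := by positivity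
    calc ((N.choose a : ℕ) : ℝ) * (((a ^ 2).choose (2 * L * a) : ℕ) : ℝ)
          * (2 * (m:ℝ) / (N.choose 2)) ^ (2 * L * a)
        ≤ (3 * N / a) ^ a * (3 * (a^2:ℕ) / (2 * L * a : ℕ) : ℝ) ^ (2 * L * a)
          * (2 * (m:ℝ) / (N.choose 2)) ^ (2 * L * a) := by
          apply mul_le_mul_of_nonneg_right _ (by positivity)
          exact mul_le_mul hχ1 hχ2 hp2 hp4
      _ ≤ (3 * N / a) ^ a * (3 * (a^2:ℕ) / (2 * L * a : ℕ) : ℝ) ^ (2 * L * a)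
          * (8 * (D:ℝ) / N) ^ (2 * L * a) := by
          apply mul_le_mul_of_nonneg_left hp3 (by positivity)
      _ = _ := by ring
  -- simplify the product of the two (2La)-powers
  have hsimp : (3 * ((a^2:ℕ):ℝ) / ((2 * L * a : ℕ):ℝ)) * (8 * (D:ℝ) / N)
      = 12 * a * D / (L * N) := by
    push_cast
    field_simp
    ring
  have hmerge : (3 * ((a^2:ℕ):ℝ) / ((2 * L * a : ℕ):ℝ)) ^ (2 * L * a)
        * (8 * (D:ℝ) / N) ^ (2 * L * a)
      = ((12 * (a:ℝ) * D / (L * N)) ^ (2*L)) ^ a := by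
    rw [← mul_pow, hsimp]
    rw [← pow_mul]
  -- now bound g(a) := (3N/a) * (12 a D/(L N))^{2L} by 1/2
  have hg : (3 * (N:ℝ) / a) * ((12 * (a:ℝ) * D / (L * N)) ^ (2*L)) ≤ 1/2 := by
    have hc : (0:ℝ) < 12 * (D:ℝ) / (L * N) := by positivity
    -- rewrite with powers of a
    have hx : (12 * (a:ℝ) * D / (L * N)) ^ (2*L)
        = (12 * (D:ℝ) / (L * N))^(2*L) * (a:ℝ)^(2*L) := by
      rw [← mul_pow]
      congr 1
      field_simp
    have hy : (3 * (N:ℝ) / a) * ((12 * (D:ℝ) / (L * N))^(2*L) * (a:ℝ)^(2*L))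
        = 3 * (N:ℝ) * (12 * (D:ℝ) / (L * N))^(2*L) * (a:ℝ)^(2*L - 1) := by
      have h2L : 2*L - 1 + 1 = 2*L := by omega
      have : (a:ℝ)^(2*L) = (a:ℝ)^(2*L-1) * a := by
        rw [← pow_succ, h2L]
      rw [this]
      field_simp
    rw [hx, hy]
    -- monotonicity in a: a ≤ 7n
    have ha7n : (a:ℝ) ≤ 7 * n := by exact_mod_cast has
    have hmono : (a:ℝ)^(2*L-1) ≤ (7*(n:ℝ))^(2*L-1) :=
      pow_le_pow_left₀ (by positivity) ha7n _
    have hnn : (0:ℝ) ≤ 3 * (N:ℝ) * (12 * (D:ℝ) / (L * N))^(2*L) := by positivity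
    calc 3 * (N:ℝ) * (12 * (D:ℝ) / (L * N))^(2*L) * (a:ℝ)^(2*L - 1)
        ≤ 3 * (N:ℝ) * (12 * (D:ℝ) / (L * N))^(2*L) * (7*(n:ℝ))^(2*L-1) :=
          mul_le_mul_of_nonneg_left hmono hnn
      _ = (3 * (N:ℝ) / (7*n)) * ((12 * (D:ℝ) / (L * N)) * (7*n))^(2*L) := by
          have h2L : 2*L - 1 + 1 = 2*L := by omega
          have hnpos : (0:ℝ) < (n:ℝ) := by exact_mod_cast hn
          have : ((12 * (D:ℝ) / (L * N)) * (7*n))^(2*L)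
              = (12 * (D:ℝ) / (L * N))^(2*L) * ((7*(n:ℝ))^(2*L-1) * (7*n)) := by
            rw [mul_pow]
            congr 1
            rw [← pow_succ, h2L]
          rw [this]
          field_simp
      _ = 9072 * (r:ℝ) * (2/9)^(2*L) := by
          have hnpos : (0:ℝ) < (n:ℝ) := by exact_mod_cast hn
          have hrpos' : (0:ℝ) < (r:ℝ) := by exact_mod_cast hrpos
          have hLpos : (0:ℝ) < (L:ℝ) := by linarith
          have hNr : (N:ℝ) = 21168 * r * n := by exact_mod_cast hN
          have hDr : (D:ℝ) = 56 * r * L := by exact_mod_cast hD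
          rw [hNr, hDr]
          have harg : 12 * (56 * (r:ℝ) * L) / ((L:ℝ) * (21168 * r * n)) * (7*n) = 2/9 := by
            field_simp
            ring
          rw [harg]
          field_simp
          try ring
      _ ≤ 1/2 := final_numeric r L hr hL6
  -- put everything together
  have hga : ((3 * (N:ℝ) / a) * ((12 * (a:ℝ) * D / (L * N)) ^ (2*L))) ^ a ≤ (1/2:ℝ)^a :=
    pow_le_pow_left₀ (by positivity) hg a
  calc ((N.choose a : ℕ) : ℝ) * (((a ^ 2).choose (2 * L * a) : ℕ) : ℝ)
        * (2 * (m:ℝ) / (N.choose 2)) ^ (2 * L * a)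
      ≤ (3 * N / a) ^ a * ((3 * (a^2:ℕ) / (2 * L * a : ℕ)) ^ (2 * L * a)
          * (8 * (D:ℝ) / N) ^ (2 * L * a)) := hstep1
    _ = (3 * (N:ℝ) / a) ^ a * ((12 * (a:ℝ) * D / (L * N)) ^ (2*L)) ^ a := by
        rw [← hmerge]
        try push_cast
        try ring
    _ = ((3 * (N:ℝ) / a) * ((12 * (a:ℝ) * D / (L * N)) ^ (2*L))) ^ a := by
        rw [mul_pow]
    _ ≤ (1/2:ℝ)^a := hga


/-! ### color subgraph -/

def colorSub {V : Type*} {r : ℕ} (G : SimpleGraph V) (f : Sym2 V → Fin r) (c : Fin r) :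
    SimpleGraph V where
  Adj u v := G.Adj u v ∧ f s(u, v) = c
  symm := by
    constructor
    intro u v h
    exact ⟨h.1.symm, by rw [Sym2.eq_swap]; exact h.2⟩
  loopless := ⟨fun u h => G.loopless.irrefl u h.1⟩

lemma colorSub_edgeFinset {V : Type*} [Fintype V] {r : ℕ} (G : SimpleGraph V)
    (f : Sym2 V → Fin r) (c : Fin r) :
    (colorSub G f c).edgeFinset = G.edgeFinset.filter (fun e => f e = c) := by
  ext e
  induction e with
  | _ x y =>
    simp only [SimpleGraph.mem_edgeFinset, Finset.mem_filter, SimpleGraph.mem_edgeSet]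
    exact Iff.rfl

end SR

open SR Finset in
theorem stmt_12 :
    ∃ C₀ : ℝ, 0 < C₀ ∧ ∀ r : ℕ, 2 ≤ r → ∃ n₀ : ℕ, ∀ n : ℕ, n₀ ≤ n →
      ∃ (V : Type) (_ : Fintype V) (G : SimpleGraph V),
        (G.edgeSet.ncard : ℝ) ≤ C₀ * r ^ 2 * Real.log r * n ∧
        ∀ f : Sym2 V → Fin r, ∃ (u w : V) (p : G.Walk u w),
          p.IsPath ∧ p.length + 1 = n ∧ ∃ c : Fin r, ∀ e ∈ p.edges, f e = c := by
  classical
  refine ⟨10^7, by norm_num, ?_⟩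
  intro r hr
  have hrpos : 0 < r := by omega
  have hr1R : (1:ℝ) < (r:ℝ) := by exact_mod_cast (by omega : 1 < r)
  have hlogr_pos : (0:ℝ) < Real.log r := Real.log_pos hr1R
  set L : ℕ := Nat.ceil (6 * Real.log r) with hLdef
  have hL1 : 1 ≤ L := by
    rw [hLdef]
    exact Nat.ceil_pos.mpr (by positivity)
  have hL6 : 6 * Real.log r ≤ (L:ℝ) := Nat.le_ceil _
  have hLle : (L:ℝ) ≤ 6 * Real.log r + 1 := by
    rw [hLdef]
    exact (Nat.ceil_lt_add_one (by positivity)).le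
  refine ⟨L + 2, ?_⟩
  intro n hn
  have hn1 : 1 ≤ n := by omega
  have hLn : L ≤ n := by omega
  set N : ℕ := 21168 * r * n with hNdef
  set D : ℕ := 56 * r * L with hDdef
  set m : ℕ := D * N with hmdef
  have hNpos : 0 < N := by
    rw [hNdef]
    exact Nat.mul_pos (Nat.mul_pos (by norm_num) hrpos) hn1
  have hM2 : 2 * (N.choose 2) = N * (N - 1) := by
    rw [Nat.choose_two_right]
    apply Nat.mul_div_cancel'
    rcases Nat.even_or_odd N with h | h
    · exact Dvd.dvd.mul_right h.two_dvd _
    · have : Even (N - 1) := Nat.Odd.sub_odd h odd_one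
      exact Dvd.dvd.mul_left this.two_dvd _
  have h4D : 4 * D + 1 ≤ N := by
    have h2 : r * L ≤ r * n := Nat.mul_le_mul_left r hLn
    have h3 : 0 < r * n := Nat.mul_pos hrpos hn1
    calc 4 * D + 1 = 224 * (r * L) + 1 := by rw [hDdef]; ring
      _ ≤ 224 * (r * n) + 1 := by omega
      _ ≤ 21168 * (r * n) := by omega
      _ = N := by rw [hNdef]; ring
  have h2m : 2 * m ≤ N.choose 2 := by
    have h4m : 4 * m ≤ 2 * (N.choose 2) := by
      rw [hM2, hmdef]
      calc 4 * (D * N) = (4 * D) * N := by ring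
        _ ≤ (N - 1) * N := Nat.mul_le_mul_right N (by omega)
        _ = N * (N - 1) := Nat.mul_comm _ _
    omega
  have hm_le : m ≤ N.choose 2 := by omega
  have hbm : 2 * L * (7 * n) ≤ m := by
    have h4 : 1 ≤ r * r := Nat.one_le_iff_ne_zero.mpr (by positivity)
    have h5 : 14 * (L * n) ≤ 1185408 * ((r * r) * (L * n)) := by
      have h6 : 14 * (L * n) ≤ 1185408 * (L * n) := by omega
      have h7 : 1185408 * (L * n) ≤ 1185408 * ((r * r) * (L * n)) := by
        apply Nat.mul_le_mul_left
        calc L * n = 1 * (L * n) := by ring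
          _ ≤ (r * r) * (L * n) := Nat.mul_le_mul_right _ h4
      omega
    calc 2 * L * (7 * n) = 14 * (L * n) := by ring
      _ ≤ 1185408 * ((r * r) * (L * n)) := h5
      _ = m := by rw [hmdef, hDdef, hNdef]; ring
  have key := key_ineq r n L N D m hr hn1 hL1 hL6 hNdef hDdef hmdef
  obtain ⟨E, hEdiag, hEcard, hEsparse⟩ := exists_sparse N m L (7 * n) hL1 hm_le hbm h2m key
  have hGex : ∃ G : SimpleGraph (Fin N), G.edgeSet = ↑E := by
    refine ⟨SimpleGraph.fromEdgeSet (↑E), ?_⟩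
    rw [SimpleGraph.edgeSet_fromEdgeSet]
    ext e
    simp only [Set.mem_diff, Set.mem_setOf_eq, Finset.mem_coe]
    exact ⟨fun h => h.1, fun h => ⟨h, hEdiag e h⟩⟩
  obtain ⟨G, hGedge⟩ := hGex
  have hGE : G.edgeFinset = E := by
    ext e
    rw [SimpleGraph.mem_edgeFinset, hGedge]
    exact Iff.rfl
  refine ⟨Fin N, inferInstance, G, ?_, ?_⟩
  · rw [hGedge, Set.ncard_coe_finset, hEcard, hmdef, hDdef, hNdef]
    exact edgecount_numeric r L n hr hLle
  · intro f
    have huniv_ne : (univ : Finset (Fin r)).Nonempty := ⟨⟨0, hrpos⟩, mem_univ _⟩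
    obtain ⟨c, _, hcmax⟩ := Finset.exists_max_image univ
      (fun c => (G.edgeFinset.filter (fun e => f e = c)).card) huniv_ne
    have hsum : G.edgeFinset.card = ∑ c' : Fin r, (G.edgeFinset.filter (fun e => f e = c')).card :=
      Finset.card_eq_sum_card_fiberwise (fun e _ => Finset.mem_univ (f e))
    have hmaj : m ≤ r * (G.edgeFinset.filter (fun e => f e = c)).card := by
      have h1 : G.edgeFinset.card = m := by rw [hGE, hEcard]
      calc m = ∑ c' : Fin r, (G.edgeFinset.filter (fun e => f e = c')).card := by
            rw [← hsum, h1]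
        _ ≤ ∑ _c' : Fin r, (G.edgeFinset.filter (fun e => f e = c)).card :=
            Finset.sum_le_sum (fun c' _ => hcmax c' (mem_univ _))
        _ = r * (G.edgeFinset.filter (fun e => f e = c)).card := by
            rw [Finset.sum_const, Finset.card_univ, Fintype.card_fin, smul_eq_mul]
    set Kc : SimpleGraph (Fin N) := colorSub G f c with hKcdef
    have hδ : (28 * L) * Fintype.card (Fin N) < Kc.edgeFinset.card := by
      rw [Fintype.card_fin, hKcdef, colorSub_edgeFinset]
      have h56 : 56 * (L * N) ≤ (G.edgeFinset.filter (fun e => f e = c)).card := by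
        apply Nat.le_of_mul_le_mul_left _ hrpos
        calc r * (56 * (L * N)) = m := by rw [hmdef, hDdef]; ring
          _ ≤ r * (G.edgeFinset.filter (fun e => f e = c)).card := hmaj
      have hLN : 0 < L * N := Nat.mul_pos (by omega) hNpos
      have h28 : 28 * (L * N) < 56 * (L * N) := by omega
      have heq : (28 * L) * N = 28 * (L * N) := by ring
      rw [heq]
      exact lt_of_lt_of_le h28 h56
    obtain ⟨W, hWne, hWdeg⟩ := exists_min_degree_subgraph Kc (28 * L) hδ
    set K : SimpleGraph (Fin N) := restrict Kc W with hKdef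
    have hKG : K ≤ G := by
      intro u v h
      exact h.1.1
    have hsparse' : ∀ A : Finset (Fin N), A.Nonempty → A.card ≤ 7 * n →
        (G.edgeSet ∩ {e | ∀ x ∈ e, x ∈ A}).ncard < 2 * L * A.card := by
      intro A h1 h2
      have hseteq : G.edgeSet ∩ {e | ∀ x ∈ e, x ∈ A}
          = ↑(E.filter (fun e => ∀ x ∈ e, x ∈ A)) := by
        ext e
        rw [Set.mem_inter_iff, hGedge]
        simp only [Finset.mem_coe, Finset.mem_filter, Set.mem_setOf_eq]
      rw [hseteq, Set.ncard_coe_finset]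
      exact hEsparse A h1 h2
    have hdeg : ∀ v ∈ K.support, 28 * L + 1 ≤ K.degree v := by
      intro v hv
      have hvW : v ∈ W := restrict_support Kc W hv
      have := hWdeg v hvW
      omega
    have hexp := expansion_of_sparse G K hKG L n hsparse' hdeg
    have hedge : ∃ u v, K.Adj u v := by
      obtain ⟨v, hvW⟩ := hWne
      have hdegv := hWdeg v hvW
      have hpos : 0 < K.degree v := by omega
      obtain ⟨w, hw⟩ := (K.degree_pos_iff_exists_adj v).mp hpos
      exact ⟨v, w, hw⟩
    obtain ⟨u, w, p, hp, hplen⟩ := posa K n hn1 hedge hexp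
    have hlen : n - 1 ≤ p.length := by
      have hls := p.length_support
      omega
    obtain ⟨x, q, hq, hqlen, hqe, _⟩ := walk_prefix p hp (n - 1) hlen
    have hqK : ∀ e ∈ q.edges, e ∈ K.edgeSet := fun e he => q.edges_subset_edgeSet he
    have hqG : ∀ e ∈ q.edges, e ∈ G.edgeSet := fun e he =>
      SimpleGraph.edgeSet_mono hKG (hqK e he)
    refine ⟨u, x, q.transfer G hqG, ?_, ?_, c, ?_⟩
    · exact hq.transfer hqG
    · rw [SimpleGraph.Walk.length_transfer, hqlen]
      omega
    · intro e he
      rw [SimpleGraph.Walk.edges_transfer] at he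
      have heK : e ∈ K.edgeSet := hqK e he
      induction e with
      | _ a b =>
        rw [SimpleGraph.mem_edgeSet] at heK
        exact heK.1.2
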